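/- arXiv:2308.13214 — 4 statements merged into one kernel-verified Lean document; each statement's English description precedes it below -/
import Mathlib

section
/- Assume the Arnoldi hypotheses through step k for A ∈ ℍ^{n×n} and V₁ ∈ ℍ^{n×m} with ‖V₁‖ = 1. Then the block system {V₁, …, V_k} is orthonormal, i.e. tr(V_i^* V_j) = δ_{ij} for all 1 ≤ i, j ≤ k, and for every j ≤ k the right span of {V₁, …, V_j} over ℍ equals the right span of {V₁, A V₁, …, A^{j−1} V₁} over ℍ; in particular {V₁, …, V_k} is an orthonormal basis of the quaternion matrix Krylov subspace 𝒦_k(A, V₁) = span{V₁, A V₁, …, A^{k−1} V₁}. -/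
open Matrix Quaternion

noncomputable section

/-- Entrywise right scalar multiple of a quaternion matrix. -/
def qsmul {n m : ℕ} (X : Matrix (Fin n) (Fin m) ℍ[ℝ]) (a : ℍ[ℝ]) :
    Matrix (Fin n) (Fin m) ℍ[ℝ] := fun i j => X i j * a

/-- Frobenius norm of a quaternion matrix: `‖X‖ = (Re tr(X^* X))^{1/2}`. -/
def qnorm {n m : ℕ} (X : Matrix (Fin n) (Fin m) ℍ[ℝ]) : ℝ :=
  Real.sqrt (Matrix.trace (Xᴴ * X)).re

/-- The Arnoldi hypotheses through step `k` for `A ∈ ℍ^{n×n}` and `V 1 ∈ ℍ^{n×m}` with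
`‖V 1‖ = 1`: for each `j = 1, …, k`, `h i j = tr(V_i^* (A V_j))` for `i ≤ j`,
`h (j+1) j = ‖A V_j − Σ_{i=1}^j V_i h_{i,j}‖ ≠ 0`, and
`V (j+1) = (A V_j − Σ_{i=1}^j V_i h_{i,j}) · h_{j+1,j}⁻¹`. -/
structure ArnoldiData (n m k : ℕ) (A : Matrix (Fin n) (Fin n) ℍ[ℝ])
    (V : ℕ → Matrix (Fin n) (Fin m) ℍ[ℝ]) (h : ℕ → ℕ → ℍ[ℝ]) : Prop where
  normV1 : qnorm (V 1) = 1
  hdef : ∀ j ∈ Finset.Icc 1 k, ∀ i ∈ Finset.Icc 1 j,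
      h i j = Matrix.trace ((V i)ᴴ * (A * V j))
  hsub : ∀ j ∈ Finset.Icc 1 k,
      h (j+1) j = (qnorm (A * V j - ∑ i ∈ Finset.Icc 1 j, qsmul (V i) (h i j)) : ℍ[ℝ])
  hsub_ne : ∀ j ∈ Finset.Icc 1 k, h (j+1) j ≠ 0
  vdef : ∀ j ∈ Finset.Icc 1 k,
      V (j+1) = qsmul (A * V j - ∑ i ∈ Finset.Icc 1 j, qsmul (V i) (h i j)) (h (j+1) j)⁻¹

section Helpers

variable {n m : ℕ}

lemma trace_qsmul_right (X Y : Matrix (Fin n) (Fin m) ℍ[ℝ]) (a : ℍ[ℝ]) :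
    Matrix.trace (Xᴴ * qsmul Y a) = Matrix.trace (Xᴴ * Y) * a := by
  simp [Matrix.trace, Matrix.mul_apply, qsmul, Matrix.diag, Finset.sum_mul, mul_assoc]

lemma trace_qsmul_left (X Y : Matrix (Fin n) (Fin m) ℍ[ℝ]) (a : ℍ[ℝ]) :
    Matrix.trace ((qsmul X a)ᴴ * Y) = star a * Matrix.trace (Xᴴ * Y) := by
  simp [Matrix.trace, Matrix.mul_apply, qsmul, Matrix.diag, Finset.mul_sum, mul_assoc,
    Matrix.conjTranspose_apply]

lemma trace_star (X Y : Matrix (Fin n) (Fin m) ℍ[ℝ]) :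
    Matrix.trace (Xᴴ * Y) = star (Matrix.trace (Yᴴ * X)) := by
  rw [← Matrix.trace_conjTranspose, Matrix.conjTranspose_mul, Matrix.conjTranspose_conjTranspose]

lemma trace_self_eq_sq (X : Matrix (Fin n) (Fin m) ℍ[ℝ]) :
    Matrix.trace (Xᴴ * X) = ((qnorm X ^ 2 : ℝ) : ℍ[ℝ]) := by
  have key : Matrix.trace (Xᴴ * X) = ((∑ i, ∑ l, normSq (X l i) : ℝ) : ℍ[ℝ]) := by
    simp [Matrix.trace, Matrix.mul_apply, Matrix.diag, Matrix.conjTranspose_apply,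
      Quaternion.star_mul_self]
    simp_rw [← Quaternion.algebraMap_def, map_sum]
  have hS : (0:ℝ) ≤ ∑ i, ∑ l, normSq (X l i) :=
    Finset.sum_nonneg fun i _ => Finset.sum_nonneg fun l _ => normSq_nonneg
  have hq : qnorm X = Real.sqrt (∑ i, ∑ l, normSq (X l i)) := by
    rw [qnorm, key]; simp
  rw [key, hq, Real.sq_sqrt hS]

lemma op_smul_eq_qsmul (X : Matrix (Fin n) (Fin m) ℍ[ℝ]) (a : ℍ[ℝ]) :
    MulOpposite.op a • X = qsmul X a := by
  funext i j
  simp [qsmul, MulOpposite.smul_eq_mul_unop]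

lemma qsmul_qsmul (X : Matrix (Fin n) (Fin m) ℍ[ℝ]) (a b : ℍ[ℝ]) :
    qsmul (qsmul X a) b = qsmul X (a * b) := by
  funext i j; simp [qsmul, mul_assoc]

lemma qsmul_one (X : Matrix (Fin n) (Fin m) ℍ[ℝ]) : qsmul X 1 = X := by
  funext i j; simp [qsmul]

/-- Left multiplication by `A` as a linear map over `ℍᵐᵒᵖ`. -/
def lmul (A : Matrix (Fin n) (Fin n) ℍ[ℝ]) :
    Matrix (Fin n) (Fin m) ℍ[ℝ] →ₗ[ℍ[ℝ]ᵐᵒᵖ] Matrix (Fin n) (Fin m) ℍ[ℝ] where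
  toFun X := A * X
  map_add' := Matrix.mul_add A
  map_smul' a X := by
    funext i j
    simp [Matrix.mul_apply, MulOpposite.smul_eq_mul_unop, Finset.sum_mul, mul_assoc]

lemma set_eq_span (j : ℕ) (v : Fin j → Matrix (Fin n) (Fin m) ℍ[ℝ]) :
    {X | ∃ α : Fin j → ℍ[ℝ], X = ∑ i, qsmul (v i) (α i)} =
    ↑(Submodule.span ℍ[ℝ]ᵐᵒᵖ (Set.range v)) := by
  ext X
  simp only [Set.mem_setOf_eq, SetLike.mem_coe, Submodule.mem_span_range_iff_exists_fun]
  constructor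
  · rintro ⟨α, rfl⟩
    exact ⟨fun i => MulOpposite.op (α i), by simp [op_smul_eq_qsmul]⟩
  · rintro ⟨c, hc⟩
    refine ⟨fun i => (c i).unop, ?_⟩
    rw [← hc]
    simp only [← op_smul_eq_qsmul, MulOpposite.op_unop]

lemma range_fin_succ_back {β : Type*} (g : ℕ → β) (j : ℕ) :
    Set.range (fun i : Fin (j+1) => g i) = Set.range (fun i : Fin j => g i) ∪ {g j} := by
  ext x
  constructor
  · rintro ⟨i, rfl⟩
    rcases lt_or_eq_of_le (Nat.lt_succ_iff.mp i.isLt) with hi | hi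
    · exact Or.inl ⟨⟨i, hi⟩, rfl⟩
    · exact Or.inr (by simp [hi])
  · rintro (⟨i, rfl⟩ | hx)
    · exact ⟨⟨i, i.isLt.trans (Nat.lt_succ_self j)⟩, rfl⟩
    · exact ⟨⟨j, Nat.lt_succ_self j⟩, by simp [Set.mem_singleton_iff.mp hx]⟩

lemma range_fin_mono {β : Type*} (g : ℕ → β) {j j' : ℕ} (hjj : j ≤ j') :
    Set.range (fun i : Fin j => g i) ⊆ Set.range (fun i : Fin j' => g i) := by
  rintro x ⟨i, rfl⟩; exact ⟨⟨i, lt_of_lt_of_le i.isLt hjj⟩, rfl⟩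

end Helpers

/-- Under the Arnoldi hypotheses through step `k`, the block system
`{V₁, …, V_k}` is orthonormal, and for every `j ≤ k` the right span over ℍ of
`{V₁, …, V_j}` equals the right span over ℍ of `{V₁, A V₁, …, A^{j−1} V₁}`; in particular
`{V₁, …, V_k}` is an orthonormal basis of the quaternion matrix Krylov subspace
`𝒦_k(A, V₁)`. -/
theorem global_quaternion_arnoldi_orthonormal_basis (n m k : ℕ)
    (A : Matrix (Fin n) (Fin n) ℍ[ℝ]) (V : ℕ → Matrix (Fin n) (Fin m) ℍ[ℝ])
    (h : ℕ → ℕ → ℍ[ℝ]) (hA : ArnoldiData n m k A V h) :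
    (∀ i ∈ Finset.Icc 1 k, ∀ j ∈ Finset.Icc 1 k,
      Matrix.trace ((V i)ᴴ * V j) = if i = j then (1 : ℍ[ℝ]) else 0) ∧
    (∀ j ∈ Finset.Icc 1 k,
      {X : Matrix (Fin n) (Fin m) ℍ[ℝ] |
          ∃ α : Fin j → ℍ[ℝ], X = ∑ i : Fin j, qsmul (V ((i : ℕ) + 1)) (α i)} =
      {X : Matrix (Fin n) (Fin m) ℍ[ℝ] |
          ∃ α : Fin j → ℍ[ℝ], X = ∑ i : Fin j, qsmul (A ^ (i : ℕ) * V 1) (α i)}) := by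
  obtain ⟨normV1, hdef, hsub, hsub_ne, vdef⟩ := hA
  have hV1 : Matrix.trace ((V 1)ᴴ * V 1) = 1 := by
    rw [trace_self_eq_sq, normV1]; norm_num
  -- Part 1: orthonormality
  have ortho : ∀ j, j ≤ k → ∀ p ∈ Finset.Icc 1 j, ∀ q ∈ Finset.Icc 1 j,
      Matrix.trace ((V p)ᴴ * V q) = if p = q then (1:ℍ[ℝ]) else 0 := by
    intro j
    induction j with
    | zero => intro _ p hp; simp at hp
    | succ j ih =>
      intro hjk p hp q hq
      rcases Nat.eq_zero_or_pos j with rfl | hj1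
      · simp only [Finset.mem_Icc] at hp hq
        have hp1 : p = 1 := le_antisymm hp.2 hp.1
        have hq1 : q = 1 := le_antisymm hq.2 hq.1
        subst hp1; subst hq1; simpa using hV1
      · have hjk' : j ≤ k := Nat.le_of_succ_le hjk
        have hjmem : j ∈ Finset.Icc 1 k := Finset.mem_Icc.mpr ⟨hj1, hjk'⟩
        have hr : h (j+1) j
            = ((qnorm (A * V j - ∑ i ∈ Finset.Icc 1 j, qsmul (V i) (h i j)) : ℝ) : ℍ[ℝ]) :=
          hsub j hjmem
        have newzero : ∀ p' ∈ Finset.Icc 1 j,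
            Matrix.trace ((V p')ᴴ * V (j+1)) = 0 := by
          intro p' hp'
          rw [vdef j hjmem, trace_qsmul_right]
          have hTW : Matrix.trace ((V p')ᴴ *
              (A * V j - ∑ i ∈ Finset.Icc 1 j, qsmul (V i) (h i j))) = 0 := by
            rw [Matrix.mul_sub, Matrix.trace_sub, Matrix.mul_sum, Matrix.trace_sum]
            have hsum : ∑ i ∈ Finset.Icc 1 j,
                Matrix.trace ((V p')ᴴ * qsmul (V i) (h i j)) = h p' j := by
              rw [Finset.sum_eq_single p']
              · rw [trace_qsmul_right, ih hjk' p' hp' p' hp', if_pos rfl, one_mul]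
              · intro i hi hne
                rw [trace_qsmul_right, ih hjk' p' hp' i hi,
                  if_neg (fun e => hne e.symm), zero_mul]
              · intro habs; exact absurd hp' habs
            rw [hsum, ← hdef j hjmem p' hp', sub_self]
          rw [hTW, zero_mul]
        have newone : Matrix.trace ((V (j+1))ᴴ * V (j+1)) = 1 := by
          rw [vdef j hjmem, trace_qsmul_left, trace_qsmul_right, trace_self_eq_sq, hr]
          set r : ℝ := qnorm (A * V j - ∑ i ∈ Finset.Icc 1 j, qsmul (V i) (h i j)) with hrdef
          have hrne : r ≠ 0 := by
            intro h0
            apply hsub_ne j hjmem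
            rw [hr, h0]
            norm_num
          rw [← Quaternion.coe_inv, Quaternion.star_coe, ← Quaternion.coe_mul,
            ← Quaternion.coe_mul, ← Quaternion.coe_one]
          congr 1
          field_simp
        simp only [Finset.mem_Icc] at hp hq
        by_cases hpj : p = j+1 <;> by_cases hqj : q = j+1
        · subst hpj; subst hqj; simpa using newone
        · subst hpj
          have hq' : q ∈ Finset.Icc 1 j :=
            Finset.mem_Icc.mpr ⟨hq.1, Nat.lt_succ_iff.mp (lt_of_le_of_ne hq.2 hqj)⟩
          rw [trace_star, newzero q hq', star_zero, if_neg (fun e => hqj e.symm)]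
        · subst hqj
          have hp' : p ∈ Finset.Icc 1 j :=
            Finset.mem_Icc.mpr ⟨hp.1, Nat.lt_succ_iff.mp (lt_of_le_of_ne hp.2 hpj)⟩
          rw [newzero p hp', if_neg hpj]
        · exact ih hjk'
            p (Finset.mem_Icc.mpr ⟨hp.1, Nat.lt_succ_iff.mp (lt_of_le_of_ne hp.2 hpj)⟩)
            q (Finset.mem_Icc.mpr ⟨hq.1, Nat.lt_succ_iff.mp (lt_of_le_of_ne hq.2 hqj)⟩)
  -- Part 2: span equality
  have memV : ∀ j l, 1 ≤ l → l ≤ j →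
      V l ∈ Submodule.span ℍ[ℝ]ᵐᵒᵖ (Set.range (fun i : Fin j => V ((i:ℕ)+1))) := by
    intro j l hl1 hlj
    apply Submodule.subset_span
    have e : l - 1 + 1 = l := by omega
    exact ⟨⟨l - 1, by omega⟩, by simp only [Fin.val_mk]; rw [e]⟩
  have qsmul_mem : ∀ (P : Submodule ℍ[ℝ]ᵐᵒᵖ (Matrix (Fin n) (Fin m) ℍ[ℝ]))
      (X : Matrix (Fin n) (Fin m) ℍ[ℝ]) (a : ℍ[ℝ]), X ∈ P → qsmul X a ∈ P := by
    intro P X a hX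
    rw [← op_smul_eq_qsmul]
    exact Submodule.smul_mem P _ hX
  -- A * V l lies in the span of V 1, ..., V (l+1), provided l ≤ k
  have hAV : ∀ j l, 1 ≤ l → l ≤ j → j + 1 ≤ k + 1 →
      A * V l ∈ Submodule.span ℍ[ℝ]ᵐᵒᵖ (Set.range (fun i : Fin (j+1) => V ((i:ℕ)+1))) := by
    intro j l hl1 hlj hjk
    have hlk : l ∈ Finset.Icc 1 k := Finset.mem_Icc.mpr ⟨hl1, by omega⟩
    have key : A * V l = qsmul (V (l+1)) (h (l+1) l)
        + ∑ i ∈ Finset.Icc 1 l, qsmul (V i) (h i l) := by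
      have := vdef l hlk
      have e : qsmul (V (l+1)) (h (l+1) l)
          = A * V l - ∑ i ∈ Finset.Icc 1 l, qsmul (V i) (h i l) := by
        rw [this, qsmul_qsmul, inv_mul_cancel₀ (hsub_ne l hlk), qsmul_one]
      rw [e]; abel
    rw [key]
    refine Submodule.add_mem _ (qsmul_mem _ _ _ (memV (j+1) (l+1) (by omega) (by omega))) ?_
    refine Submodule.sum_mem _ fun i hi => ?_
    have hi' := Finset.mem_Icc.mp hi
    exact qsmul_mem _ _ _ (memV (j+1) i hi'.1 (by omega))
  have spaneq : ∀ j, j ≤ k →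
      Submodule.span ℍ[ℝ]ᵐᵒᵖ (Set.range (fun i : Fin j => V ((i:ℕ)+1))) =
      Submodule.span ℍ[ℝ]ᵐᵒᵖ (Set.range (fun i : Fin j => A ^ (i:ℕ) * V 1)) := by
    intro j
    induction j with
    | zero =>
      intro _
      congr 1
      rw [Set.range_eq_empty, Set.range_eq_empty]
    | succ j ih =>
      intro hjk
      have hjk' : j ≤ k := Nat.le_of_succ_le hjk
      have IH := ih hjk'
      -- left multiplication by A maps span V₁..V_j into span V₁..V_{j+1}
      have hmapS : Submodule.map (lmul (m := m) A)
          (Submodule.span ℍ[ℝ]ᵐᵒᵖ (Set.range (fun i : Fin j => V ((i:ℕ)+1)))) ≤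
          Submodule.span ℍ[ℝ]ᵐᵒᵖ (Set.range (fun i : Fin (j+1) => V ((i:ℕ)+1))) := by
        rw [Submodule.map_le_iff_le_comap, Submodule.span_le]
        rintro x ⟨i, rfl⟩
        have : A * V ((i:ℕ)+1) ∈
            Submodule.span ℍ[ℝ]ᵐᵒᵖ (Set.range (fun i : Fin (j+1) => V ((i:ℕ)+1))) :=
          hAV j ((i:ℕ)+1) (by omega) (by omega) (by omega)
        exact this
      -- left multiplication by A maps the Krylov span at step j into step j+1
      have hmapK : Submodule.map (lmul (m := m) A)
          (Submodule.span ℍ[ℝ]ᵐᵒᵖ (Set.range (fun i : Fin j => A ^ (i:ℕ) * V 1))) ≤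
          Submodule.span ℍ[ℝ]ᵐᵒᵖ (Set.range (fun i : Fin (j+1) => A ^ (i:ℕ) * V 1)) := by
        rw [Submodule.map_le_iff_le_comap, Submodule.span_le]
        rintro x ⟨i, rfl⟩
        have : A * (A ^ (i:ℕ) * V 1) ∈
            Submodule.span ℍ[ℝ]ᵐᵒᵖ (Set.range (fun i : Fin (j+1) => A ^ (i:ℕ) * V 1)) := by
          apply Submodule.subset_span
          refine ⟨⟨(i:ℕ)+1, by omega⟩, ?_⟩
          simp only [← Matrix.mul_assoc, ← pow_succ']
        exact this
      apply le_antisymm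
      · rw [Submodule.span_le]
        rintro x ⟨i, rfl⟩
        by_cases hij : (i:ℕ) < j
        · -- V (i+1) is in span V₁..V_j = Krylov j ⊆ Krylov (j+1)
          have h1 : V ((i:ℕ)+1) ∈
              Submodule.span ℍ[ℝ]ᵐᵒᵖ (Set.range (fun i : Fin j => V ((i:ℕ)+1))) :=
            memV j ((i:ℕ)+1) (by omega) (by omega)
          rw [IH] at h1
          exact Submodule.span_mono (range_fin_mono (fun l => A ^ l * V 1) (by omega)) h1
        · -- i = j : the new vector V (j+1)
          have hij' : (i:ℕ) = j := by omega
          simp only [SetLike.mem_coe]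
          rw [hij']
          rcases Nat.eq_zero_or_pos j with rfl | hj1
          · -- j = 0 : V 1 = A^0 * V 1
            apply Submodule.subset_span
            exact ⟨⟨0, Nat.zero_lt_one⟩, by simp⟩
          have hjmem : j ∈ Finset.Icc 1 k := Finset.mem_Icc.mpr ⟨hj1, hjk'⟩
          rw [vdef j hjmem]
          apply qsmul_mem
          apply Submodule.sub_mem
          · -- A * V j ∈ Krylov (j+1)
            have hVj : V j ∈
                Submodule.span ℍ[ℝ]ᵐᵒᵖ (Set.range (fun i : Fin j => V ((i:ℕ)+1))) :=
              memV j j hj1 le_rfl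
            rw [IH] at hVj
            exact hmapK ⟨V j, by rw [← IH]; exact memV j j hj1 le_rfl, rfl⟩
          · refine Submodule.sum_mem _ fun i' hi' => ?_
            have hi'' := Finset.mem_Icc.mp hi'
            apply qsmul_mem
            have h1 : V i' ∈
                Submodule.span ℍ[ℝ]ᵐᵒᵖ (Set.range (fun i : Fin j => V ((i:ℕ)+1))) :=
              memV j i' hi''.1 hi''.2
            rw [IH] at h1
            exact Submodule.span_mono (range_fin_mono (fun l => A ^ l * V 1) (by omega)) h1
      · rw [Submodule.span_le]
        rintro x ⟨i, rfl⟩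
        by_cases hij : (i:ℕ) < j
        · have h1 : A ^ (i:ℕ) * V 1 ∈
              Submodule.span ℍ[ℝ]ᵐᵒᵖ (Set.range (fun i : Fin j => A ^ (i:ℕ) * V 1)) :=
            Submodule.subset_span ⟨⟨(i:ℕ), hij⟩, rfl⟩
          rw [← IH] at h1
          exact Submodule.span_mono (range_fin_mono (fun l => V (l+1)) (by omega)) h1
        · have hij' : (i:ℕ) = j := by omega
          simp only [SetLike.mem_coe]
          rw [hij']
          rcases Nat.eq_zero_or_pos j with rfl | hj1
          · -- A^0 * V 1 = V 1
            rw [pow_zero, Matrix.one_mul]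
            exact memV 1 1 le_rfl le_rfl
          · -- A^j * V 1 = A * (A^(j-1) * V 1)
            obtain ⟨jj, rfl⟩ : ∃ jj, j = jj + 1 := ⟨j - 1, by omega⟩
            have hprev : A ^ jj * V 1 ∈
                Submodule.span ℍ[ℝ]ᵐᵒᵖ
                  (Set.range (fun i : Fin (jj+1) => A ^ (i:ℕ) * V 1)) :=
              Submodule.subset_span ⟨⟨jj, by omega⟩, rfl⟩
            rw [← IH] at hprev
            have := hmapS ⟨A ^ jj * V 1, hprev, rfl⟩
            rw [pow_succ', Matrix.mul_assoc]; exact this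
  refine ⟨fun i hi j hj => ortho k le_rfl i hi j hj, fun j hj => ?_⟩
  have h1 : {X : Matrix (Fin n) (Fin m) ℍ[ℝ] |
      ∃ α : Fin j → ℍ[ℝ], X = ∑ i : Fin j, qsmul (V ((i : ℕ) + 1)) (α i)} =
      ↑(Submodule.span ℍ[ℝ]ᵐᵒᵖ (Set.range (fun i : Fin j => V ((i:ℕ)+1)))) :=
    set_eq_span j _
  have h2 : {X : Matrix (Fin n) (Fin m) ℍ[ℝ] |
      ∃ α : Fin j → ℍ[ℝ], X = ∑ i : Fin j, qsmul (A ^ (i : ℕ) * V 1) (α i)} =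
      ↑(Submodule.span ℍ[ℝ]ᵐᵒᵖ (Set.range (fun i : Fin j => A ^ (i:ℕ) * V 1)))  :=
    set_eq_span j _
  rw [h1, h2, spaneq j (Finset.mem_Icc.mp hj).2]
end
end

section
/- Let A ∈ ℍ^{n×n}, let V₁ ∈ ℍ^{n×m} with ‖V₁‖ = 1, and assume the Arnoldi hypotheses through step k−1 (so V₁, …, V_k and the quaternions h_{i,j} for j ≤ k−1 are defined and h_{j+1,j} ≠ 0 for j = 1, …, k−1). Define h_{i,k} = tr(V_i^*(A V_k)) for i = 1, …, k and W_k := A V_k − Σ_{i=1}^k V_i h_{i,k}. Then W_k = 0 (i.e. the global quaternion Arnoldi process breaks down at step k) if and only if the grade of V₁ with respect to A is k, i.e. V₁, A V₁, …, A^{k−1} V₁ are right linearly independent over ℍ while V₁, A V₁, …, A^{k} V₁ are right linearly dependent over ℍ. Moreover, if W_k = 0 then the subspace 𝒦_k(A, V₁) (the right span of V₁, A V₁, …, A^{k−1} V₁ over ℍ) is invariant under left multiplication by A. -/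
open Matrix Quaternion

noncomputable section

/- ===== auxiliary machinery ===== -/
section Aux
variable {n m : ℕ}

lemma qsmul_zero' (X : Matrix (Fin n) (Fin m) ℍ[ℝ]) : qsmul X 0 = 0 := by
  funext i j; simp [qsmul]

lemma qsmul_add_coeff (X : Matrix (Fin n) (Fin m) ℍ[ℝ]) (a b : ℍ[ℝ]) :
    qsmul X (a + b) = qsmul X a + qsmul X b := by
  funext i j; simp [qsmul, mul_add]

lemma qsmul_neg_coeff (X : Matrix (Fin n) (Fin m) ℍ[ℝ]) (a : ℍ[ℝ]) :
    qsmul X (-a) = -(qsmul X a) := by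
  funext i j; simp [qsmul]

lemma mul_qsmul (B : Matrix (Fin n) (Fin n) ℍ[ℝ]) (X : Matrix (Fin n) (Fin m) ℍ[ℝ]) (a : ℍ[ℝ]) :
    B * qsmul X a = qsmul (B * X) a := by
  funext i j; simp [qsmul, Matrix.mul_apply, Finset.sum_mul, mul_assoc]

lemma sub_qsmul (X Y : Matrix (Fin n) (Fin m) ℍ[ℝ]) (a : ℍ[ℝ]) :
    qsmul (X - Y) a = qsmul X a - qsmul Y a := by
  funext i j; simp [qsmul, sub_mul]

lemma sum_qsmul {ι : Type*} (s : Finset ι) (f : ι → Matrix (Fin n) (Fin m) ℍ[ℝ]) (a : ℍ[ℝ]) :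
    qsmul (∑ i ∈ s, f i) a = ∑ i ∈ s, qsmul (f i) a := by
  funext i j; simp [qsmul, Matrix.sum_apply, Finset.sum_mul]

/-- quaternion-valued inner product -/
def ip (X Y : Matrix (Fin n) (Fin m) ℍ[ℝ]) : ℍ[ℝ] := Matrix.trace (Xᴴ * Y)

lemma ip_eq_sum (X Y : Matrix (Fin n) (Fin m) ℍ[ℝ]) :
    ip X Y = ∑ j : Fin m, ∑ i : Fin n, star (X i j) * Y i j := by
  simp [ip, Matrix.trace, Matrix.mul_apply, Matrix.diag, Matrix.conjTranspose_apply]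

lemma ip_qsmul_right (X Y : Matrix (Fin n) (Fin m) ℍ[ℝ]) (a : ℍ[ℝ]) :
    ip X (qsmul Y a) = ip X Y * a := by
  simp [ip_eq_sum, qsmul, Finset.sum_mul, mul_assoc]

lemma ip_qsmul_left (X Y : Matrix (Fin n) (Fin m) ℍ[ℝ]) (a : ℍ[ℝ]) :
    ip (qsmul X a) Y = star a * ip X Y := by
  simp [ip_eq_sum, qsmul, Finset.mul_sum, mul_assoc]

lemma ip_sub_right (X Y Z : Matrix (Fin n) (Fin m) ℍ[ℝ]) :
    ip X (Y - Z) = ip X Y - ip X Z := by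
  simp [ip, Matrix.mul_sub]

lemma ip_add_right (X Y Z : Matrix (Fin n) (Fin m) ℍ[ℝ]) :
    ip X (Y + Z) = ip X Y + ip X Z := by
  simp [ip, Matrix.mul_add]

lemma ip_zero_right (X : Matrix (Fin n) (Fin m) ℍ[ℝ]) : ip X 0 = 0 := by
  simp [ip]

lemma ip_sum_right {ι : Type*} (s : Finset ι) (X : Matrix (Fin n) (Fin m) ℍ[ℝ])
    (f : ι → Matrix (Fin n) (Fin m) ℍ[ℝ]) :
    ip X (∑ i ∈ s, f i) = ∑ i ∈ s, ip X (f i) := by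
  simp [ip, Matrix.mul_sum]

lemma ip_star (X Y : Matrix (Fin n) (Fin m) ℍ[ℝ]) : ip X Y = star (ip Y X) := by
  simp [ip_eq_sum, star_sum, StarMul.star_mul]

lemma coe_sum_q {ι : Type*} (s : Finset ι) (f : ι → ℝ) :
    ((∑ i ∈ s, f i : ℝ) : ℍ[ℝ]) = ∑ i ∈ s, ((f i : ℝ) : ℍ[ℝ]) :=
  map_sum (algebraMap ℝ ℍ[ℝ]) f s

lemma ip_self_eq (X : Matrix (Fin n) (Fin m) ℍ[ℝ]) :
    ip X X = ((∑ j : Fin m, ∑ i : Fin n, normSq (X i j) : ℝ) : ℍ[ℝ]) := by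
  rw [ip_eq_sum]
  rw [coe_sum_q]
  simp_rw [coe_sum_q]
  exact Finset.sum_congr rfl fun j _ => Finset.sum_congr rfl fun i _ => star_mul_self _

lemma ip_self_re (X : Matrix (Fin n) (Fin m) ℍ[ℝ]) :
    (ip X X).re = ∑ j : Fin m, ∑ i : Fin n, normSq (X i j) := by
  rw [ip_self_eq]; simp

lemma ip_self_re_nonneg (X : Matrix (Fin n) (Fin m) ℍ[ℝ]) : 0 ≤ (ip X X).re := by
  rw [ip_self_re]
  exact Finset.sum_nonneg fun j _ => Finset.sum_nonneg fun i _ => normSq_nonneg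

lemma qnorm_sq (X : Matrix (Fin n) (Fin m) ℍ[ℝ]) : (qnorm X) ^ 2 = (ip X X).re :=
  Real.sq_sqrt (ip_self_re_nonneg X)

lemma ip_self_eq_qnorm (X : Matrix (Fin n) (Fin m) ℍ[ℝ]) :
    ip X X = (((qnorm X)^2 : ℝ) : ℍ[ℝ]) := by
  rw [qnorm_sq, ip_self_re]
  rw [ip_self_eq]

/-- right span of `u 0, …, u (t-1)` -/
def sp (u : ℕ → Matrix (Fin n) (Fin m) ℍ[ℝ]) (t : ℕ) : Set (Matrix (Fin n) (Fin m) ℍ[ℝ]) :=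
  {X | ∃ c : ℕ → ℍ[ℝ], X = ∑ i ∈ Finset.range t, qsmul (u i) (c i)}

variable {u w : ℕ → Matrix (Fin n) (Fin m) ℍ[ℝ]} {t t' : ℕ}

lemma sp_zero : (0 : Matrix (Fin n) (Fin m) ℍ[ℝ]) ∈ sp u t :=
  ⟨0, by simp [qsmul_zero']⟩

lemma sp_add {X Y : Matrix (Fin n) (Fin m) ℍ[ℝ]} (hX : X ∈ sp u t) (hY : Y ∈ sp u t) :
    X + Y ∈ sp u t := by
  obtain ⟨c, rfl⟩ := hX; obtain ⟨c', rfl⟩ := hY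
  exact ⟨c + c', by simp [qsmul_add_coeff, Finset.sum_add_distrib]⟩

lemma sp_neg {X : Matrix (Fin n) (Fin m) ℍ[ℝ]} (hX : X ∈ sp u t) : -X ∈ sp u t := by
  obtain ⟨c, rfl⟩ := hX
  exact ⟨fun i => -(c i), by simp [qsmul_neg_coeff]⟩

lemma sp_sub {X Y : Matrix (Fin n) (Fin m) ℍ[ℝ]} (hX : X ∈ sp u t) (hY : Y ∈ sp u t) :
    X - Y ∈ sp u t := by
  rw [sub_eq_add_neg]; exact sp_add hX (sp_neg hY)

lemma sp_smul {X : Matrix (Fin n) (Fin m) ℍ[ℝ]} (a : ℍ[ℝ]) (hX : X ∈ sp u t) :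
    qsmul X a ∈ sp u t := by
  obtain ⟨c, rfl⟩ := hX
  exact ⟨fun i => c i * a, by rw [sum_qsmul]; simp [qsmul_qsmul]⟩

lemma sp_mono (htt : t ≤ t') : sp u t ⊆ sp u t' := by
  rintro X ⟨c, rfl⟩
  refine ⟨fun i => if i < t then c i else 0, ?_⟩
  have e1 : ∀ i ∈ Finset.range t, qsmul (u i) (c i)
      = qsmul (u i) (if i < t then c i else 0) := fun i hi => by
    rw [if_pos (Finset.mem_range.1 hi)]
  rw [Finset.sum_congr rfl e1, Finset.sum_subset (Finset.range_subset_range.2 htt)]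
  intro i _ hi
  rw [if_neg (by simpa using hi), qsmul_zero']

lemma sp_gen {i : ℕ} (hi : i < t) : u i ∈ sp u t := by
  refine ⟨fun j => if j = i then 1 else 0, ?_⟩
  rw [Finset.sum_eq_single_of_mem i (Finset.mem_range.2 hi)]
  · simp [qsmul_one]
  · intro b _ hb; simp [hb, qsmul_zero']

lemma sp_sum {ι : Type*} {s : Finset ι} {f : ι → Matrix (Fin n) (Fin m) ℍ[ℝ]}
    (hf : ∀ i ∈ s, f i ∈ sp u t) : (∑ i ∈ s, f i) ∈ sp u t :=
  Finset.sum_induction f (· ∈ sp u t) (fun _ _ => sp_add) sp_zero hf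

lemma sp_subset {s : ℕ} (hgen : ∀ i < t, u i ∈ sp w s) : sp u t ⊆ sp w s := by
  rintro X ⟨c, rfl⟩
  exact sp_sum fun i hi => sp_smul _ (hgen i (Finset.mem_range.1 hi))

lemma sp_shift {X : Matrix (Fin n) (Fin m) ℍ[ℝ]} (hX : X ∈ sp (fun i => u (i + 1)) t) :
    X ∈ sp u (t + 1) := by
  obtain ⟨c, rfl⟩ := hX
  refine ⟨fun i => if i = 0 then 0 else c (i - 1), ?_⟩
  rw [Finset.sum_range_succ']
  simp [qsmul_zero']

lemma mul_mem_sp_succ {A : Matrix (Fin n) (Fin n) ℍ[ℝ]} {V1 : Matrix (Fin n) (Fin m) ℍ[ℝ]}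
    {X : Matrix (Fin n) (Fin m) ℍ[ℝ]} (hX : X ∈ sp (fun i => A ^ i * V1) t) :
    A * X ∈ sp (fun i => A ^ i * V1) (t + 1) := by
  obtain ⟨c, rfl⟩ := hX
  apply sp_shift
  refine ⟨c, ?_⟩
  rw [Matrix.mul_sum]
  refine Finset.sum_congr rfl fun i _ => ?_
  rw [mul_qsmul, ← Matrix.mul_assoc, ← pow_succ']

end Aux

section Structural
variable {n m K : ℕ} {A : Matrix (Fin n) (Fin n) ℍ[ℝ]} {V : ℕ → Matrix (Fin n) (Fin m) ℍ[ℝ]}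
  {h : ℕ → ℕ → ℍ[ℝ]}

lemma coe_q_ne_zero {r : ℝ} (hr : r ≠ 0) : ((r : ℝ) : ℍ[ℝ]) ≠ 0 := by
  intro h0
  apply hr
  have := congrArg QuaternionAlgebra.re h0
  simpa using this

lemma orth_aux (hA : ArnoldiData n m K A V h) :
    ∀ j, 1 ≤ j → j ≤ K + 1 → ∀ i, 1 ≤ i → i ≤ j →
      ip (V i) (V j) = if i = j then 1 else 0 := by
  intro j
  induction j using Nat.strong_induction_on with
  | _ j IH =>
  intro hj1 hjK i hi1 hij
  match j, hj1 with
  | 1, _ =>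
    interval_cases i
    rw [if_pos rfl, ip_self_eq_qnorm, hA.normV1]
    norm_num
  | (t+2), _ =>
    set t' := t + 1 with ht'
    have ht'1 : 1 ≤ t' := by omega
    have ht'K : t' ∈ Finset.Icc 1 K := Finset.mem_Icc.2 ⟨ht'1, by omega⟩
    have hv := hA.vdef t' ht'K
    have hs := hA.hsub t' ht'K
    have hsne := hA.hsub_ne t' ht'K
    set Wt := A * V t' - ∑ l ∈ Finset.Icc 1 t', qsmul (V l) (h l t') with hWt
    -- symmetrized induction hypothesis
    have IH2 : ∀ a b, 1 ≤ a → a ≤ t' → 1 ≤ b → b ≤ t' →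
        ip (V a) (V b) = if a = b then 1 else 0 := by
      intro a b ha1 hat hb1 hbt
      rcases le_or_gt a b with hab | hba
      · exact IH b (by omega) hb1 (by omega) a ha1 hab
      · rw [ip_star, IH a (by omega) ha1 (by omega) b hb1 (le_of_lt hba)]
        rcases eq_or_ne a b with rfl | hne
        · simp
        · rw [if_neg (fun e => hne e.symm), if_neg hne, star_zero]
    rcases Nat.lt_or_ge i (t' + 1) with hilt | hige
    · -- i ≤ t' : orthogonality
      have hit : i ≤ t' := by omega
      have hiW : ip (V i) Wt = 0 := by
        rw [hWt, ip_sub_right, ip_sum_right]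
        have hterm : ∀ l ∈ Finset.Icc 1 t',
            ip (V i) (qsmul (V l) (h l t')) = (if i = l then 1 else 0) * h l t' := by
          intro l hl
          obtain ⟨hl1, hlt⟩ := Finset.mem_Icc.1 hl
          rw [ip_qsmul_right, IH2 i l hi1 hit hl1 hlt]
        rw [Finset.sum_congr rfl hterm,
          Finset.sum_eq_single_of_mem i (Finset.mem_Icc.2 ⟨hi1, hit⟩)
            (fun b _ hb => by rw [if_neg (fun e => hb e.symm), zero_mul]),
          if_pos rfl, one_mul,
          show ip (V i) (A * V t') = h i t' from (hA.hdef t' ht'K i (Finset.mem_Icc.2 ⟨hi1, hit⟩)).symm,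
          sub_self]
      rw [if_neg (by omega), hv, ip_qsmul_right, hiW, zero_mul]
    · -- i = t' + 1 : normalization
      have hieq : i = t' + 1 := by omega
      subst hieq
      rw [if_pos rfl, hv, ip_qsmul_left, ip_qsmul_right, ip_self_eq_qnorm]
      set r := qnorm Wt with hr
      have hrne : r ≠ 0 := by
        intro h0
        apply hsne
        rw [hs, h0]
        exact_mod_cast rfl
      have hinv : ((h (t' + 1) t'))⁻¹ = ((r⁻¹ : ℝ) : ℍ[ℝ]) := by
        rw [hs]
        exact (map_inv₀ (algebraMap ℝ ℍ[ℝ]) r).symm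
      rw [hinv]
      have hstar : star ((r⁻¹ : ℝ) : ℍ[ℝ]) = ((r⁻¹ : ℝ) : ℍ[ℝ]) := Quaternion.star_coe _
      rw [hstar, ← Quaternion.coe_mul, ← Quaternion.coe_mul]
      have : r⁻¹ * (r ^ 2 * r⁻¹) = 1 := by field_simp
      rw [this]
      exact_mod_cast rfl

lemma orth (hA : ArnoldiData n m K A V h) {i j : ℕ} (hi1 : 1 ≤ i) (hiK : i ≤ K + 1)
    (hj1 : 1 ≤ j) (hjK : j ≤ K + 1) : ip (V i) (V j) = if i = j then 1 else 0 := by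
  rcases eq_or_ne i j with rfl | hne
  · exact orth_aux hA i hi1 hiK i hi1 le_rfl
  rcases le_or_gt i j with hij | hji
  · exact orth_aux hA j hj1 hjK i hi1 hij
  · rw [ip_star, orth_aux hA i hi1 hiK j hj1 (le_of_lt hji),
      if_neg (fun e => hne e.symm), if_neg hne, star_zero]

lemma span_aux (hA : ArnoldiData n m K A V h) :
    ∀ j, 1 ≤ j → j ≤ K + 1 → ∃ c : ℍ[ℝ], c ≠ 0 ∧
      V j - qsmul (A ^ (j - 1) * V 1) c ∈ sp (fun i => A ^ i * V 1) (j - 1) := by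
  intro j
  induction j using Nat.strong_induction_on with
  | _ j IH =>
  intro hj1 hjK
  match j, hj1 with
  | 1, _ =>
    refine ⟨1, one_ne_zero, ?_⟩
    simp only [Nat.sub_self, pow_zero, Matrix.one_mul, qsmul_one, sub_self]
    exact sp_zero
  | (t+2), _ =>
    set u : ℕ → Matrix (Fin n) (Fin m) ℍ[ℝ] := fun i => A ^ i * V 1 with hu
    set t' := t + 1 with ht'
    have ht'K : t' ∈ Finset.Icc 1 K := Finset.mem_Icc.2 ⟨by omega, by omega⟩
    have hv := hA.vdef t' ht'K
    have hsne := hA.hsub_ne t' ht'K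
    -- membership of the V l, l ≤ t', in sp u t'
    have Vmem : ∀ l, 1 ≤ l → l ≤ t' → V l ∈ sp u t' := by
      intro l hl1 hlt
      obtain ⟨c, _, hY⟩ := IH l (by omega) hl1 (by omega)
      have h1 : V l - qsmul (u (l - 1)) c ∈ sp u t' :=
        sp_mono (by omega) hY
      have h2 : qsmul (u (l - 1)) c ∈ sp u t' := sp_smul _ (sp_gen (by omega))
      have := sp_add h1 h2
      rwa [sub_add_cancel] at this
    obtain ⟨c, hc0, hY⟩ := IH t' (by omega) (by omega) (by omega)
    set Y := V t' - qsmul (u (t' - 1)) c with hYdef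
    have hVt : V t' = Y + qsmul (u (t' - 1)) c := by rw [hYdef, sub_add_cancel]
    have hAu : A * u (t' - 1) = u t' := by
      rw [hu]
      show A * (A ^ (t' - 1) * V 1) = A ^ t' * V 1
      rw [← Matrix.mul_assoc, ← pow_succ', Nat.sub_add_cancel (by omega : 1 ≤ t')]
    have hAVt : A * V t' = A * Y + qsmul (u t') c := by
      rw [hVt, Matrix.mul_add, mul_qsmul, hAu]
    have hAY : A * Y ∈ sp u t' := by
      have := mul_mem_sp_succ (A := A) (V1 := V 1) hY
      rwa [show t' - 1 + 1 = t' by omega] at this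
    set S := ∑ l ∈ Finset.Icc 1 t', qsmul (V l) (h l t') with hS
    have hSmem : S ∈ sp u t' := sp_sum fun l hl => by
      obtain ⟨hl1, hlt⟩ := Finset.mem_Icc.1 hl
      exact sp_smul _ (Vmem l hl1 hlt)
    refine ⟨c * (h (t' + 1) t')⁻¹, mul_ne_zero hc0 (inv_ne_zero hsne), ?_⟩
    have hWc : (A * V t' - S) - qsmul (u t') c = A * Y - S := by
      rw [hAVt]; abel
    have key : V (t' + 1) - qsmul (u t') (c * (h (t' + 1) t')⁻¹)
        = qsmul (A * Y - S) (h (t' + 1) t')⁻¹ := by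
      rw [hv, ← qsmul_qsmul, ← sub_qsmul, hWc]
    show V (t' + 1) - qsmul (u t') (c * (h (t' + 1) t')⁻¹) ∈ sp u t'
    rw [key]
    exact sp_smul _ (sp_sub hAY hSmem)

lemma V_mem_sp_u (hA : ArnoldiData n m K A V h) {j t : ℕ} (hj1 : 1 ≤ j) (hjt : j ≤ t)
    (htK : t ≤ K + 1) : V j ∈ sp (fun i => A ^ i * V 1) t := by
  obtain ⟨c, _, hY⟩ := span_aux hA j hj1 (by omega)
  have h1 : V j - qsmul ((fun i => A ^ i * V 1) (j - 1)) c ∈ sp (fun i => A ^ i * V 1) t :=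
    sp_mono (by omega) hY
  have h2 : qsmul ((fun i => A ^ i * V 1) (j - 1)) c ∈ sp (fun i => A ^ i * V 1) t :=
    sp_smul _ (sp_gen (by omega))
  have := sp_add h1 h2
  rwa [sub_add_cancel] at this

lemma rev_aux (hA : ArnoldiData n m K A V h) :
    ∀ j, j ≤ K → ∃ d : ℍ[ℝ], d ≠ 0 ∧
      A ^ j * V 1 - qsmul (V (j + 1)) d ∈ sp (fun l => V (l + 1)) j := by
  intro j
  induction j using Nat.strong_induction_on with
  | _ j IH =>
  intro hjK
  set u : ℕ → Matrix (Fin n) (Fin m) ℍ[ℝ] := fun i => A ^ i * V 1 with hu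
  set v : ℕ → Matrix (Fin n) (Fin m) ℍ[ℝ] := fun l => V (l + 1) with hv
  obtain ⟨c, hc0, hY⟩ := span_aux hA (j + 1) (by omega) (by omega)
  rw [show (j + 1) - 1 = j from rfl] at hY
  set Y := V (j + 1) - qsmul (u j) c with hYdef
  have huj : u j = qsmul (V (j + 1)) c⁻¹ - qsmul Y c⁻¹ := by
    have : qsmul (u j) c = V (j + 1) - Y := by rw [hYdef]; abel
    calc u j = qsmul (qsmul (u j) c) c⁻¹ := by
            rw [qsmul_qsmul, mul_inv_cancel₀ hc0, qsmul_one]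
      _ = qsmul (V (j + 1) - Y) c⁻¹ := by rw [this]
      _ = qsmul (V (j + 1)) c⁻¹ - qsmul Y c⁻¹ := sub_qsmul _ _ _
  have hsub : sp u j ⊆ sp v j := by
    apply sp_subset
    intro i hij
    obtain ⟨d, _, hZ⟩ := IH i hij (by omega)
    have h1 : u i - qsmul (V (i + 1)) d ∈ sp v j := sp_mono (le_of_lt hij) hZ
    have h2 : qsmul (V (i + 1)) d ∈ sp v j := sp_smul _ (sp_gen hij)
    have := sp_add h1 h2
    rwa [sub_add_cancel] at this
  refine ⟨c⁻¹, inv_ne_zero hc0, ?_⟩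
  have : u j - qsmul (V (j + 1)) c⁻¹ = -(qsmul Y c⁻¹) := by rw [huj]; abel
  rw [show A ^ j * V 1 = u j from rfl, this]
  exact sp_neg (sp_smul _ (hsub hY))

lemma u_mem_sp_v (hA : ArnoldiData n m K A V h) {i : ℕ} (hiK : i ≤ K) :
    A ^ i * V 1 ∈ sp (fun l => V (l + 1)) (i + 1) := by
  obtain ⟨d, _, hZ⟩ := rev_aux hA i hiK
  have h1 : A ^ i * V 1 - qsmul (V (i + 1)) d ∈ sp (fun l => V (l + 1)) (i + 1) :=
    sp_mono (by omega) hZ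
  have h2 : qsmul (V (i + 1)) d ∈ sp (fun l => V (l + 1)) (i + 1) :=
    sp_smul _ (sp_gen (by omega))
  have := sp_add h1 h2
  rwa [sub_add_cancel] at this

lemma sp_u_sub_sp_v (hA : ArnoldiData n m K A V h) {t : ℕ} (htK : t ≤ K + 1) :
    sp (fun i => A ^ i * V 1) t ⊆ sp (fun l => V (l + 1)) t := by
  apply sp_subset
  intro i hit
  exact sp_mono (by omega) (u_mem_sp_v hA (by omega))

lemma ip_orth_sp (hA : ArnoldiData n m K A V h) {s t : ℕ} (hs1 : 1 ≤ s) (hsK : s ≤ K + 1)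
    (hts : t < s) {X : Matrix (Fin n) (Fin m) ℍ[ℝ]} (hX : X ∈ sp (fun l => V (l + 1)) t) :
    ip (V s) X = 0 := by
  obtain ⟨β, rfl⟩ := hX
  rw [ip_sum_right]
  refine Finset.sum_eq_zero fun l hl => ?_
  have hlt := Finset.mem_range.1 hl
  rw [ip_qsmul_right, orth hA hs1 hsK (by omega) (by omega), if_neg (by omega), zero_mul]

lemma indep (hA : ArnoldiData n m K A V h) :
    ∀ t, t ≤ K + 1 → ∀ α : ℕ → ℍ[ℝ],
      (∑ i ∈ Finset.range t, qsmul (A ^ i * V 1) (α i)) = 0 → ∀ i < t, α i = 0 := by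
  intro t
  induction t with
  | zero => intro _ _ _ i hi; omega
  | succ t IHt =>
    intro htK α hrel i hit
    have htK' : t ≤ K := by omega
    obtain ⟨d, hd0, hZ⟩ := rev_aux hA t htK'
    have hαt : α t = 0 := by
      have h0 : ip (V (t + 1)) (∑ i ∈ Finset.range (t + 1), qsmul (A ^ i * V 1) (α i)) = 0 := by
        rw [hrel, ip_zero_right]
      rw [ip_sum_right] at h0
      have hterm : ∀ i ∈ Finset.range (t + 1),
          ip (V (t + 1)) (qsmul (A ^ i * V 1) (α i))
          = (if i = t then d else 0) * α i := by
        intro i hi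
        have hit' := Finset.mem_range.1 hi
        rw [ip_qsmul_right]
        rcases eq_or_ne i t with rfl | hne
        · rw [if_pos rfl]
          congr 1
          have e1 : A ^ i * V 1 = (A ^ i * V 1 - qsmul (V (i + 1)) d) + qsmul (V (i + 1)) d := by
            abel
          rw [e1, ip_add_right, ip_orth_sp hA (by omega) (by omega) (by omega) hZ,
            ip_qsmul_right, orth hA (by omega) (by omega) (by omega) (by omega),
            if_pos rfl, one_mul, zero_add]
        · rw [if_neg hne]
          have hiK : i ≤ K := by omega
          rw [ip_orth_sp hA (by omega) (by omega) (by omega) (u_mem_sp_v hA hiK), zero_mul]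
      rw [Finset.sum_congr rfl hterm,
        Finset.sum_eq_single_of_mem t (Finset.mem_range.2 (by omega))
          (fun b _ hb => by rw [if_neg hb, zero_mul]),
        if_pos rfl] at h0
      exact (mul_eq_zero.1 h0).resolve_left hd0
    rcases Nat.lt_or_ge i t with hi | hi
    · apply IHt (by omega) α _ i hi
      rw [Finset.sum_range_succ, hαt, qsmul_zero', add_zero] at hrel
      exact hrel
    · have : i = t := by omega
      rw [this]; exact hαt

end Structural

lemma fin_sum_to_range {n m k : ℕ} (f : ℕ → Matrix (Fin n) (Fin m) ℍ[ℝ]) (α : Fin k → ℍ[ℝ]) :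
    ∑ i : Fin k, qsmul (f (i : ℕ)) (α i)
      = ∑ i ∈ Finset.range k, qsmul (f i) (if hi : i < k then α ⟨i, hi⟩ else 0) := by
  rw [← Fin.sum_univ_eq_sum_range (fun i => qsmul (f i) (if hi : i < k then α ⟨i, hi⟩ else 0)) k]
  exact Finset.sum_congr rfl fun i _ => by rw [dif_pos i.isLt]

lemma range_sum_to_fin {n m k : ℕ} (f : ℕ → Matrix (Fin n) (Fin m) ℍ[ℝ]) (γ : ℕ → ℍ[ℝ]) :
    ∑ i ∈ Finset.range k, qsmul (f i) (γ i) = ∑ i : Fin k, qsmul (f (i : ℕ)) (γ (i : ℕ)) :=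
  (Fin.sum_univ_eq_sum_range (fun i => qsmul (f i) (γ i)) k).symm

/-- Under the Arnoldi hypotheses through step `k − 1`, with
`W_k := A V_k − Σ_{i=1}^k V_i tr(V_i^*(A V_k))`, the global quaternion Arnoldi process
breaks down at step `k` (`W_k = 0`) if and only if the grade of `V₁` with respect to `A`
is `k`: `V₁, A V₁, …, A^{k−1} V₁` are right linearly independent over ℍ while
`V₁, A V₁, …, A^k V₁` are right linearly dependent over ℍ. Moreover, if `W_k = 0` then
the Krylov subspace `𝒦_k(A, V₁)` (the right span of `V₁, A V₁, …, A^{k−1} V₁`) is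
invariant under left multiplication by `A`. -/
theorem global_quaternion_arnoldi_breakdown_iff_grade (n m k : ℕ) (hk : 1 ≤ k)
    (A : Matrix (Fin n) (Fin n) ℍ[ℝ]) (V : ℕ → Matrix (Fin n) (Fin m) ℍ[ℝ])
    (h : ℕ → ℕ → ℍ[ℝ]) (hA : ArnoldiData n m (k - 1) A V h)
    (W : Matrix (Fin n) (Fin m) ℍ[ℝ])
    (hW : W = A * V k -
        ∑ i ∈ Finset.Icc 1 k, qsmul (V i) (Matrix.trace ((V i)ᴴ * (A * V k)))) :
    (W = 0 ↔
      ((∀ α : Fin k → ℍ[ℝ],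
          ∑ i : Fin k, qsmul (A ^ (i : ℕ) * V 1) (α i) = 0 → α = 0) ∧
       (∃ α : Fin (k + 1) → ℍ[ℝ], α ≠ 0 ∧
          ∑ i : Fin (k + 1), qsmul (A ^ (i : ℕ) * V 1) (α i) = 0))) ∧
    (W = 0 →
      ∀ X ∈ {X : Matrix (Fin n) (Fin m) ℍ[ℝ] |
          ∃ α : Fin k → ℍ[ℝ], X = ∑ i : Fin k, qsmul (A ^ (i : ℕ) * V 1) (α i)},
        A * X ∈ {X : Matrix (Fin n) (Fin m) ℍ[ℝ] |
          ∃ α : Fin k → ℍ[ℝ], X = ∑ i : Fin k, qsmul (A ^ (i : ℕ) * V 1) (α i)}) := by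
  have hK1 : k - 1 + 1 = k := Nat.succ_pred_eq_of_pos hk
  obtain ⟨c, hc0, hYm⟩ := span_aux hA k hk (by omega)
  set Y := V k - qsmul (A ^ (k - 1) * V 1) c with hYdef
  have hVk : V k = Y + qsmul (A ^ (k - 1) * V 1) c := by rw [hYdef, sub_add_cancel]
  have hAu : A * (A ^ (k - 1) * V 1) = A ^ k * V 1 := by
    rw [← Matrix.mul_assoc, ← pow_succ', Nat.sub_add_cancel hk]
  have hAVk : A * V k = A * Y + qsmul (A ^ k * V 1) c := by
    rw [hVk, Matrix.mul_add, mul_qsmul, hAu]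
  have hAYm : A * Y ∈ sp (fun i => A ^ i * V 1) k := by
    have := mul_mem_sp_succ (A := A) (V1 := V 1) hYm
    rwa [hK1] at this
  -- W = 0 ↔ A V_k ∈ Krylov span
  have hD : W = 0 ↔ A * V k ∈ sp (fun i => A ^ i * V 1) k := by
    constructor
    · intro h0
      rw [hW] at h0
      rw [sub_eq_zero.1 h0]
      refine sp_sum fun i hi => ?_
      obtain ⟨hi1, hik⟩ := Finset.mem_Icc.1 hi
      exact sp_smul _ (V_mem_sp_u hA hi1 hik (by omega))
    · intro hmem
      obtain ⟨δ, hδ⟩ := sp_u_sub_sp_v hA (by omega : k ≤ k - 1 + 1) hmem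
      have hcoef : ∀ i ∈ Finset.Icc 1 k,
          Matrix.trace ((V i)ᴴ * (A * V k)) = δ (i - 1) := by
        intro i hi
        obtain ⟨hi1, hik⟩ := Finset.mem_Icc.1 hi
        show ip (V i) (A * V k) = δ (i - 1)
        rw [hδ, ip_sum_right]
        have hterm : ∀ l ∈ Finset.range k, ip (V i) (qsmul (V (l + 1)) (δ l))
            = (if i = l + 1 then 1 else 0) * δ l := by
          intro l hl
          have hlk := Finset.mem_range.1 hl
          rw [ip_qsmul_right, orth hA hi1 (by omega) (by omega) (by omega)]
        rw [Finset.sum_congr rfl hterm,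
          Finset.sum_eq_single_of_mem (i - 1) (Finset.mem_range.2 (by omega))
            (fun b _ hb => by rw [if_neg (by omega), zero_mul]),
          if_pos (by omega), one_mul]
      rw [hW, Finset.sum_congr rfl (fun i hi => by rw [hcoef i hi]), hδ, sub_eq_zero]
      rw [← Finset.Ico_add_one_right_eq_Icc, Finset.sum_Ico_eq_sum_range]
      refine Finset.sum_congr (by norm_num) fun l hl => ?_
      rw [show 1 + l = l + 1 by omega, Nat.add_sub_cancel]
  -- A V_k ∈ Krylov span ↔ A^k V_1 ∈ Krylov span
  have hE : A * V k ∈ sp (fun i => A ^ i * V 1) k ↔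
      A ^ k * V 1 ∈ sp (fun i => A ^ i * V 1) k := by
    constructor
    · intro hmem
      have h1 : qsmul (A ^ k * V 1) c ∈ sp (fun i => A ^ i * V 1) k := by
        have e : qsmul (A ^ k * V 1) c = A * V k - A * Y := by rw [hAVk]; abel
        rw [e]; exact sp_sub hmem hAYm
      have := sp_smul c⁻¹ h1
      rwa [qsmul_qsmul, mul_inv_cancel₀ hc0, qsmul_one] at this
    · intro hmem
      rw [hAVk]; exact sp_add hAYm (sp_smul _ hmem)
  -- independence of the first k Krylov matrices (always true)
  have hIndep : ∀ α : Fin k → ℍ[ℝ],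
      ∑ i : Fin k, qsmul (A ^ (i : ℕ) * V 1) (α i) = 0 → α = 0 := by
    intro α hα
    have h1 : ∑ i ∈ Finset.range k,
        qsmul (A ^ i * V 1) (if hi : i < k then α ⟨i, hi⟩ else 0) = 0 := by
      rw [← fin_sum_to_range (fun i => A ^ i * V 1) α]
      exact hα
    have h2 := indep hA k (by omega) _ h1
    funext i
    have h3 := h2 i i.isLt
    rw [dif_pos i.isLt] at h3
    simpa using h3
  -- A^k V_1 ∈ Krylov span ↔ dependence
  have hF : A ^ k * V 1 ∈ sp (fun i => A ^ i * V 1) k ↔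
      (∃ α : Fin (k + 1) → ℍ[ℝ], α ≠ 0 ∧
        ∑ i : Fin (k + 1), qsmul (A ^ (i : ℕ) * V 1) (α i) = 0) := by
    constructor
    · rintro ⟨γ, hγ⟩
      set β : ℕ → ℍ[ℝ] := fun i => if i = k then -1 else γ i with hβ
      have hrel : ∑ i ∈ Finset.range (k + 1), qsmul (A ^ i * V 1) (β i) = 0 := by
        rw [Finset.sum_range_succ]
        have e1 : ∑ i ∈ Finset.range k, qsmul (A ^ i * V 1) (β i)
            = ∑ i ∈ Finset.range k, qsmul (A ^ i * V 1) (γ i) :=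
          Finset.sum_congr rfl fun i hi => by
            rw [hβ]
            simp only []
            rw [if_neg (by have := Finset.mem_range.1 hi; omega)]
        have e2 : β k = -1 := by rw [hβ]; simp
        rw [e1, e2, ← hγ, show (-1 : ℍ[ℝ]) = -(1 : ℍ[ℝ]) from rfl, qsmul_neg_coeff,
          qsmul_one, add_neg_cancel]
      refine ⟨fun i => β (i : ℕ), ?_, ?_⟩
      · intro h0
        have := congrFun h0 ⟨k, by omega⟩
        rw [hβ] at this
        simp at this
      · rw [range_sum_to_fin (fun i => A ^ i * V 1) β] at hrel
        exact hrel
    · rintro ⟨α, hαne, hαrel⟩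
      set β : ℕ → ℍ[ℝ] := fun i => if hi : i < k + 1 then α ⟨i, hi⟩ else 0 with hβ
      have hrel : ∑ i ∈ Finset.range (k + 1), qsmul (A ^ i * V 1) (β i) = 0 := by
        rw [← fin_sum_to_range (fun i => A ^ i * V 1) α]
        exact hαrel
      rw [Finset.sum_range_succ] at hrel
      have hβk : β k ≠ 0 := by
        intro h0
        rw [h0, qsmul_zero', add_zero] at hrel
        have hz := indep hA k (by omega) β hrel
        apply hαne
        funext i
        rcases Nat.lt_or_ge (i : ℕ) k with hik | hik
        · have h5 := hz i hik
          simp only [hβ] at h5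
          rw [dif_pos i.isLt] at h5
          simpa using h5
        · have hieq : (i : ℕ) = k := by omega
          have h5 : β (i : ℕ) = 0 := by rw [hieq]; exact h0
          simp only [hβ] at h5
          rw [dif_pos i.isLt] at h5
          simpa using h5
      have hneg : qsmul (A ^ k * V 1) (β k)
          = -(∑ i ∈ Finset.range k, qsmul (A ^ i * V 1) (β i)) :=
        eq_neg_of_add_eq_zero_right hrel
      have hS : (∑ i ∈ Finset.range k, qsmul (A ^ i * V 1) (β i))
          ∈ sp (fun i => A ^ i * V 1) k := ⟨β, rfl⟩
      have huk : A ^ k * V 1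
          = qsmul (-(∑ i ∈ Finset.range k, qsmul (A ^ i * V 1) (β i))) (β k)⁻¹ := by
        rw [← hneg, qsmul_qsmul, mul_inv_cancel₀ hβk, qsmul_one]
      rw [huk]
      exact sp_smul _ (sp_neg hS)
  refine ⟨⟨fun h0 => ⟨hIndep, hF.1 (hE.1 (hD.1 h0))⟩,
      fun hg => hD.2 (hE.2 (hF.2 hg.2))⟩, ?_⟩
  -- invariance
  intro h0 X hX
  obtain ⟨α, rfl⟩ := hX
  have huk : A ^ k * V 1 ∈ sp (fun i => A ^ i * V 1) k := hE.1 (hD.1 h0)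
  have hmem : A * (∑ i : Fin k, qsmul (A ^ (i : ℕ) * V 1) (α i))
      ∈ sp (fun i => A ^ i * V 1) k := by
    rw [fin_sum_to_range (fun i => A ^ i * V 1) α, Matrix.mul_sum]
    refine sp_sum fun i hi => ?_
    have hik := Finset.mem_range.1 hi
    have e : A * qsmul (A ^ i * V 1) (if hi : i < k then α ⟨i, hi⟩ else 0)
        = qsmul (A ^ (i + 1) * V 1) (if hi : i < k then α ⟨i, hi⟩ else 0) := by
      rw [mul_qsmul, ← Matrix.mul_assoc, ← pow_succ']
    rw [e]
    rcases Nat.lt_or_ge (i + 1) k with hlt | hge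
    · exact sp_smul _ (sp_gen hlt)
    · have he : i + 1 = k := by omega
      rw [he]
      exact sp_smul _ huk
  obtain ⟨γ, hγ⟩ := hmem
  exact ⟨fun i => γ (i : ℕ), by rw [hγ, range_sum_to_fin (fun i => A ^ i * V 1) γ]⟩
end
end

section
/- (Reduction of the Gl-QGMRES minimization to a small least-squares problem.) Let A ∈ ℍ^{n×n}, B, X₀ ∈ ℍ^{n×m}, R₀ := B − A X₀, β := ‖R₀‖ > 0, V₁ := R₀ β^{-1}, and assume the Arnoldi hypotheses through step k; extend h_{i,j} by h_{i,j} := 0 for i > j+1. Then for every y = (y₁, …, y_k) ∈ ℍ^k, ‖B − A(X₀ + Σ_{j=1}^k V_j y_j)‖² = Σ_{i=1}^{k+1} | β δ_{i1} − Σ_{j=1}^k h_{i,j} y_j |², i.e. ‖B − A(X₀ + 𝒱_k * y)‖ = ‖β ē₁ − H̄_k y‖, where H̄_k ∈ ℍ^{(k+1)×k} is the rectangular upper Hessenberg matrix with entries h_{i,j} and ē₁ = (1,0,…,0)^T ∈ ℝ^{k+1}. -/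
open Matrix Quaternion

noncomputable section

namespace GLQ


variable {n m : ℕ}

def ip (X Y : Matrix (Fin n) (Fin m) ℍ[ℝ]) : ℍ[ℝ] := Matrix.trace (Yᴴ * X)

lemma qsmul_add (X : Matrix (Fin n) (Fin m) ℍ[ℝ]) (a b : ℍ[ℝ]) :
    qsmul X (a + b) = qsmul X a + qsmul X b := by
  funext i j; simp [qsmul, mul_add]

lemma qsmul_zero (X : Matrix (Fin n) (Fin m) ℍ[ℝ]) : qsmul X 0 = 0 := by
  funext i j; simp [qsmul]

lemma qsmul_one (X : Matrix (Fin n) (Fin m) ℍ[ℝ]) : qsmul X 1 = X := by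
  funext i j; simp [qsmul]

lemma sub_qsmul (X Y : Matrix (Fin n) (Fin m) ℍ[ℝ]) (a : ℍ[ℝ]) :
    qsmul (X - Y) a = qsmul X a - qsmul Y a := by
  funext i j; simp [qsmul, sub_mul]

lemma qsmul_sub (X : Matrix (Fin n) (Fin m) ℍ[ℝ]) (a b : ℍ[ℝ]) :
    qsmul X (a - b) = qsmul X a - qsmul X b := by
  funext i j; simp [qsmul, mul_sub]

lemma qsmul_qsmul (X : Matrix (Fin n) (Fin m) ℍ[ℝ]) (a b : ℍ[ℝ]) :
    qsmul (qsmul X a) b = qsmul X (a * b) := by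
  funext i j; simp [qsmul, mul_assoc]

lemma mul_qsmul (A : Matrix (Fin n) (Fin n) ℍ[ℝ]) (X : Matrix (Fin n) (Fin m) ℍ[ℝ]) (a : ℍ[ℝ]) :
    A * qsmul X a = qsmul (A * X) a := by
  funext i j; simp [qsmul, Matrix.mul_apply, Finset.sum_mul, mul_assoc]

lemma qsmul_sum {ι : Type*} (s : Finset ι) (f : ι → ℍ[ℝ]) (X : Matrix (Fin n) (Fin m) ℍ[ℝ]) :
    qsmul X (∑ i ∈ s, f i) = ∑ i ∈ s, qsmul X (f i) := by
  funext i j; simp [qsmul, Finset.mul_sum, Matrix.sum_apply]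

lemma ip_qsmul_left (X Y : Matrix (Fin n) (Fin m) ℍ[ℝ]) (a : ℍ[ℝ]) :
    ip (qsmul X a) Y = ip X Y * a := by
  simp only [ip, Matrix.trace, Matrix.diag, Matrix.mul_apply, qsmul,
    Matrix.conjTranspose_apply, Finset.sum_mul]
  congr 1; funext i; congr 1; funext l; rw [mul_assoc]

lemma ip_qsmul_right (X Y : Matrix (Fin n) (Fin m) ℍ[ℝ]) (a : ℍ[ℝ]) :
    ip X (qsmul Y a) = star a * ip X Y := by
  simp only [ip, Matrix.trace, Matrix.diag, Matrix.mul_apply, qsmul,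
    Matrix.conjTranspose_apply, Finset.mul_sum]
  congr 1; funext i; congr 1; funext l
  rw [StarMul.star_mul, mul_assoc]

lemma ip_sub_left (X Y Z : Matrix (Fin n) (Fin m) ℍ[ℝ]) :
    ip (X - Y) Z = ip X Z - ip Y Z := by
  simp [ip, Matrix.mul_sub]

lemma ip_sum_left {ι : Type*} (s : Finset ι) (f : ι → Matrix (Fin n) (Fin m) ℍ[ℝ])
    (Y : Matrix (Fin n) (Fin m) ℍ[ℝ]) :
    ip (∑ i ∈ s, f i) Y = ∑ i ∈ s, ip (f i) Y := by
  simp [ip, Matrix.mul_sum]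

lemma ip_sum_right {ι : Type*} (s : Finset ι) (f : ι → Matrix (Fin n) (Fin m) ℍ[ℝ])
    (X : Matrix (Fin n) (Fin m) ℍ[ℝ]) :
    ip X (∑ i ∈ s, f i) = ∑ i ∈ s, ip X (f i) := by
  simp [ip, Matrix.sum_mul, Matrix.conjTranspose_sum]

lemma ip_conj (X Y : Matrix (Fin n) (Fin m) ℍ[ℝ]) : ip Y X = star (ip X Y) := by
  simp only [ip]
  rw [← Matrix.trace_conjTranspose, Matrix.conjTranspose_mul, Matrix.conjTranspose_conjTranspose]

lemma coe_sum {ι : Type*} (s : Finset ι) (f : ι → ℝ) :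
    ((∑ i ∈ s, f i : ℝ) : ℍ[ℝ]) = ∑ i ∈ s, ((f i : ℝ) : ℍ[ℝ]) := by
  classical
  induction s using Finset.induction with
  | empty => simp
  | insert hx ih => simp_all [Quaternion.coe_add]

lemma ip_self_eq (X : Matrix (Fin n) (Fin m) ℍ[ℝ]) :
    ip X X = ((∑ i, ∑ l, ‖X l i‖ ^ 2 : ℝ) : ℍ[ℝ]) := by
  simp only [ip, Matrix.trace, Matrix.diag, Matrix.mul_apply, Matrix.conjTranspose_apply,
    Quaternion.star_mul_self]
  rw [coe_sum]
  congr 1; funext i; rw [coe_sum]; congr 1; funext l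
  rw [sq, ← Quaternion.normSq_eq_norm_mul_self]

lemma ip_self_re (X : Matrix (Fin n) (Fin m) ℍ[ℝ]) :
    (ip X X).re = ∑ i, ∑ l, ‖X l i‖ ^ 2 := by
  rw [ip_self_eq]; exact Quaternion.re_coe _

lemma ip_self_re_nonneg (X : Matrix (Fin n) (Fin m) ℍ[ℝ]) : 0 ≤ (ip X X).re := by
  rw [ip_self_re]
  positivity

lemma qnorm_sq (X : Matrix (Fin n) (Fin m) ℍ[ℝ]) : qnorm X ^ 2 = (ip X X).re :=
  Real.sq_sqrt (ip_self_re_nonneg X)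

lemma ip_self_coe (X : Matrix (Fin n) (Fin m) ℍ[ℝ]) :
    ip X X = ((qnorm X ^ 2 : ℝ) : ℍ[ℝ]) := by
  rw [qnorm_sq]
  conv_lhs => rw [ip_self_eq]
  rw [ip_self_re]


lemma qsmul_sum_left {ι : Type*} (s : Finset ι) (F : ι → Matrix (Fin n) (Fin m) ℍ[ℝ])
    (a : ℍ[ℝ]) : qsmul (∑ i ∈ s, F i) a = ∑ i ∈ s, qsmul (F i) a := by
  funext i j; simp [qsmul, Matrix.sum_apply, Finset.sum_mul]

lemma ortho (k : ℕ) (A : Matrix (Fin n) (Fin n) ℍ[ℝ])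
    (V : ℕ → Matrix (Fin n) (Fin m) ℍ[ℝ]) (h : ℕ → ℕ → ℍ[ℝ])
    (hA : ArnoldiData n m k A V h) :
    ∀ j, j ≤ k → ∀ i ∈ Finset.Icc 1 (j+1), ∀ i' ∈ Finset.Icc 1 (j+1),
      ip (V i) (V i') = if i = i' then 1 else 0 := by
  intro j
  induction j with
  | zero =>
    intro _ i hi i' hi'
    simp only [Finset.mem_Icc] at hi hi'
    have h1 : i = 1 := by omega
    have h2 : i' = 1 := by omega
    subst h1; subst h2
    rw [ip_self_coe, hA.normV1, if_pos rfl]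
    norm_num
  | succ j ih =>
    intro hjk i hi i' hi'
    have hj : j ≤ k := Nat.le_of_succ_le hjk
    have hjj : j + 1 ∈ Finset.Icc 1 k := Finset.mem_Icc.mpr ⟨by omega, hjk⟩
    set W := A * V (j+1) - ∑ i ∈ Finset.Icc 1 (j+1), qsmul (V i) (h i (j+1)) with hWdef
    have hWl : ∀ l ∈ Finset.Icc 1 (j+1), ip W (V l) = 0 := by
      intro l hl
      rw [hWdef, ip_sub_left, ip_sum_left]
      have h1 : ip (A * V (j+1)) (V l) = h l (j+1) := (hA.hdef (j+1) hjj l hl).symm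
      have h2 : ∀ i ∈ Finset.Icc 1 (j+1), ip (qsmul (V i) (h i (j+1))) (V l)
          = if i = l then h i (j+1) else 0 := by
        intro i hi2
        rw [ip_qsmul_left, ih hj i hi2 l hl]
        split_ifs with hil
        · rw [one_mul]
        · rw [zero_mul]
      rw [Finset.sum_congr rfl h2, Finset.sum_ite_eq' (Finset.Icc 1 (j+1)) l
        (fun i => h i (j+1)), if_pos hl, h1, sub_self]
    have hv2 : V (j+1+1) = qsmul W (h (j+1+1) (j+1))⁻¹ := hA.vdef (j+1) hjj
    have hnew : ∀ l ∈ Finset.Icc 1 (j+1), ip (V (j+1+1)) (V l) = 0 := by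
      intro l hl
      rw [hv2, ip_qsmul_left, hWl l hl, zero_mul]
    have hnew' : ∀ l ∈ Finset.Icc 1 (j+1), ip (V l) (V (j+1+1)) = 0 := by
      intro l hl; rw [ip_conj, hnew l hl, star_zero]
    have hself : ip (V (j+1+1)) (V (j+1+1)) = 1 := by
      have hq : h (j+1+1) (j+1) = ((qnorm W : ℝ) : ℍ[ℝ]) := hA.hsub (j+1) hjj
      have hne : h (j+1+1) (j+1) ≠ 0 := hA.hsub_ne (j+1) hjj
      rw [hq] at hne
      have hc : qnorm W ≠ 0 := fun h0 => hne (by rw [h0, Quaternion.coe_zero])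
      rw [hv2, ip_qsmul_right, ip_qsmul_left, ip_self_coe, hq,
        ← Quaternion.coe_inv, Quaternion.star_coe, ← Quaternion.coe_mul,
        ← Quaternion.coe_mul, ← Quaternion.coe_one]
      congr 1
      field_simp
    simp only [Finset.mem_Icc] at hi hi'
    by_cases hcase : i ≤ j + 1
    · by_cases hcase' : i' ≤ j + 1
      · exact ih hj i (Finset.mem_Icc.mpr ⟨by omega, hcase⟩)
          i' (Finset.mem_Icc.mpr ⟨by omega, hcase'⟩)
      · have hii' : i' = j + 1 + 1 := by omega
        subst hii'
        rw [hnew' i (Finset.mem_Icc.mpr ⟨by omega, hcase⟩), if_neg (by omega)]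
    · have hii : i = j + 1 + 1 := by omega
      subst hii
      by_cases hcase' : i' ≤ j + 1
      · rw [hnew i' (Finset.mem_Icc.mpr ⟨by omega, hcase'⟩), if_neg (by omega)]
      · have hii' : i' = j + 1 + 1 := by omega
        subst hii'
        rw [hself, if_pos rfl]

lemma AV_eq (k : ℕ) (A : Matrix (Fin n) (Fin n) ℍ[ℝ])
    (V : ℕ → Matrix (Fin n) (Fin m) ℍ[ℝ]) (h : ℕ → ℕ → ℍ[ℝ])
    (hA : ArnoldiData n m k A V h)
    (hzero : ∀ i j : ℕ, j + 1 < i → h i j = 0) :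
    ∀ j ∈ Finset.Icc 1 k, A * V j = ∑ i ∈ Finset.Icc 1 (k+1), qsmul (V i) (h i j) := by
  intro j hj
  have hjm := Finset.mem_Icc.mp hj
  have hW : qsmul (V (j+1)) (h (j+1) j)
      = A * V j - ∑ i ∈ Finset.Icc 1 j, qsmul (V i) (h i j) := by
    rw [hA.vdef j hj, qsmul_qsmul, inv_mul_cancel₀ (hA.hsub_ne j hj), qsmul_one]
  have h1 : A * V j = ∑ i ∈ Finset.Icc 1 (j+1), qsmul (V i) (h i j) := by
    rw [Finset.sum_Icc_succ_top (by omega : 1 ≤ j + 1), hW]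
    abel
  rw [h1]
  apply Finset.sum_subset
  · intro x hx
    simp only [Finset.mem_Icc] at hx ⊢
    omega
  · intro x hx hnx
    simp only [Finset.mem_Icc] at hx hnx
    rw [hzero x j (by omega), qsmul_zero]

end GLQ

/-- Reduction of the Gl-QGMRES minimization to a small least-squares
problem: with `R₀ = B − A X₀`, `β = ‖R₀‖ > 0`, `V₁ = R₀ β⁻¹`, the Arnoldi hypotheses
through step `k` and `h i j = 0` for `i > j+1`, for every `y ∈ ℍ^k`,
`‖B − A(X₀ + Σ_{j=1}^k V_j y_j)‖² = Σ_{i=1}^{k+1} |β δ_{i1} − Σ_{j=1}^k h_{i,j} y_j|²`,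
i.e. `‖B − A(X₀ + 𝒱_k * y)‖ = ‖β ē₁ − H̄_k y‖`. -/
theorem glqgmres_least_squares_reduction (n m k : ℕ)
    (A : Matrix (Fin n) (Fin n) ℍ[ℝ]) (B X₀ : Matrix (Fin n) (Fin m) ℍ[ℝ])
    (R₀ : Matrix (Fin n) (Fin m) ℍ[ℝ]) (hR₀ : R₀ = B - A * X₀)
    (β : ℝ) (hβ : β = qnorm R₀) (hβpos : 0 < β)
    (V : ℕ → Matrix (Fin n) (Fin m) ℍ[ℝ]) (hV1 : V 1 = qsmul R₀ ((β : ℍ[ℝ])⁻¹))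
    (h : ℕ → ℕ → ℍ[ℝ]) (hA : ArnoldiData n m k A V h)
    (hzero : ∀ i j : ℕ, j + 1 < i → h i j = 0) :
    ∀ y : ℕ → ℍ[ℝ],
      qnorm (B - A * (X₀ + ∑ j ∈ Finset.Icc 1 k, qsmul (V j) (y j))) ^ 2 =
      ∑ i ∈ Finset.Icc 1 (k + 1),
        ‖(if i = 1 then (β : ℍ[ℝ]) else 0) - ∑ j ∈ Finset.Icc 1 k, h i j * y j‖ ^ 2 := by
  intro y
  set z : ℕ → ℍ[ℝ] :=
    fun i => (if i = 1 then (β : ℍ[ℝ]) else 0) - ∑ j ∈ Finset.Icc 1 k, h i j * y j with hz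
  have hβne : (β : ℍ[ℝ]) ≠ 0 := by
    intro hc
    rw [← Quaternion.coe_zero] at hc
    exact (ne_of_gt hβpos) (Quaternion.coe_injective hc)
  have hR0V : R₀ = qsmul (V 1) ((β : ℝ) : ℍ[ℝ]) := by
    rw [hV1, GLQ.qsmul_qsmul, inv_mul_cancel₀ hβne, GLQ.qsmul_one]
  have hres : B - A * (X₀ + ∑ j ∈ Finset.Icc 1 k, qsmul (V j) (y j))
      = ∑ i ∈ Finset.Icc 1 (k+1), qsmul (V i) (z i) := by
    have e1 : B - A * (X₀ + ∑ j ∈ Finset.Icc 1 k, qsmul (V j) (y j))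
        = R₀ - ∑ j ∈ Finset.Icc 1 k, qsmul (A * V j) (y j) := by
      rw [hR₀, Matrix.mul_add, Matrix.mul_sum]
      simp only [GLQ.mul_qsmul]
      abel
    have e2 : ∀ j ∈ Finset.Icc 1 k, qsmul (A * V j) (y j)
        = ∑ i ∈ Finset.Icc 1 (k+1), qsmul (V i) (h i j * y j) := by
      intro j hj
      rw [GLQ.AV_eq k A V h hA hzero j hj, GLQ.qsmul_sum_left]
      exact Finset.sum_congr rfl fun i _ => GLQ.qsmul_qsmul _ _ _
    have e3 : qsmul (V 1) ((β : ℝ) : ℍ[ℝ])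
        = ∑ i ∈ Finset.Icc 1 (k+1), qsmul (V i) (if i = 1 then (β : ℍ[ℝ]) else 0) := by
      rw [Finset.sum_eq_single 1]
      · rw [if_pos rfl]
      · intro b _ hb1
        rw [if_neg hb1, GLQ.qsmul_zero]
      · intro hna
        exact absurd (Finset.mem_Icc.mpr ⟨le_refl 1, by omega⟩) hna
    rw [e1, hR0V, Finset.sum_congr rfl e2, Finset.sum_comm, e3]
    simp only [hz, GLQ.qsmul_sub, GLQ.qsmul_sum, Finset.sum_sub_distrib]
  rw [hres, GLQ.qnorm_sq]
  have horto := GLQ.ortho k A V h hA k (le_refl k)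
  have key : GLQ.ip (∑ i ∈ Finset.Icc 1 (k+1), qsmul (V i) (z i))
      (∑ i ∈ Finset.Icc 1 (k+1), qsmul (V i) (z i))
      = ((∑ i ∈ Finset.Icc 1 (k+1), ‖z i‖ ^ 2 : ℝ) : ℍ[ℝ]) := by
    rw [GLQ.ip_sum_right, GLQ.coe_sum]
    refine Finset.sum_congr rfl fun i' hi' => ?_
    rw [GLQ.ip_sum_left]
    rw [Finset.sum_eq_single i']
    · rw [GLQ.ip_qsmul_right, GLQ.ip_qsmul_left, horto i' hi' i' hi', if_pos rfl, one_mul,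
        Quaternion.star_mul_self, sq, ← Quaternion.normSq_eq_norm_mul_self]
    · intro b hb hbne
      rw [GLQ.ip_qsmul_right, GLQ.ip_qsmul_left, horto b hb i' hi', if_neg hbne,
        zero_mul, mul_zero]
    · intro hna
      exact absurd hi' hna
  rw [key, Quaternion.re_coe]
end
end

section
/- (Generalized quaternion Givens rotation.) Let h₁, h₂ ∈ ℍ with h₂ ≠ 0 and |h₁| ≤ |h₂|. Set r := (|h₁|² + |h₂|²)^{1/2}, g₁₁ := h₁ r^{-1}, g₂₁ := h₂ r^{-1}, g₁₂ := |g₂₁| (a positive real), and g₂₂ := −(g₂₁ |g₂₁|^{-1}) ḡ₁₁ (where ḡ₁₁ is the quaternion conjugate of g₁₁). Then the 2×2 quaternion matrix G = [g₁₁, g₁₂; g₂₁, g₂₂] is unitary, i.e. G^* G = I₂, and G^* (h₁, h₂)^T = (r, 0)^T. -/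
open Matrix Quaternion

noncomputable section

/-- Generalized quaternion Givens rotation: for `h₁, h₂ ∈ ℍ` with
`h₂ ≠ 0` and `|h₁| ≤ |h₂|`, set `r = (|h₁|² + |h₂|²)^{1/2}`, `g₁₁ = h₁ r⁻¹`,
`g₂₁ = h₂ r⁻¹`, `g₁₂ = |g₂₁|` and `g₂₂ = −(g₂₁ |g₂₁|⁻¹) ḡ₁₁`. Then the `2×2` quaternion
matrix `G = [g₁₁, g₁₂; g₂₁, g₂₂]` is unitary and `G^* (h₁, h₂)ᵀ = (r, 0)ᵀ`. -/
theorem generalized_quaternion_givens (h₁ h₂ : ℍ[ℝ]) (hh₂ : h₂ ≠ 0)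
    (hle : ‖h₁‖ ≤ ‖h₂‖)
    (r : ℝ) (hr : r = Real.sqrt (‖h₁‖ ^ 2 + ‖h₂‖ ^ 2))
    (g₁₁ g₂₁ g₁₂ g₂₂ : ℍ[ℝ])
    (hg₁₁ : g₁₁ = h₁ * ((r : ℍ[ℝ]))⁻¹)
    (hg₂₁ : g₂₁ = h₂ * ((r : ℍ[ℝ]))⁻¹)
    (hg₁₂ : g₁₂ = ((‖g₂₁‖ : ℝ) : ℍ[ℝ]))
    (hg₂₂ : g₂₂ = -(g₂₁ * ((‖g₂₁‖ : ℝ) : ℍ[ℝ])⁻¹) * star g₁₁)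
    (G : Matrix (Fin 2) (Fin 2) ℍ[ℝ]) (hG : G = !![g₁₁, g₁₂; g₂₁, g₂₂]) :
    Gᴴ * G = 1 ∧ Gᴴ *ᵥ ![h₁, h₂] = ![(r : ℍ[ℝ]), 0] := by
  have hrpos : 0 < r := by
    rw [hr]
    apply Real.sqrt_pos.mpr
    have : 0 < ‖h₂‖ := norm_pos_iff.mpr hh₂
    positivity
  have hrne : r ≠ 0 := hrpos.ne'
  have hrsq : r ^ 2 = ‖h₁‖ ^ 2 + ‖h₂‖ ^ 2 := by
    rw [hr]; apply Real.sq_sqrt; positivity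
  have hcoe_inv : ((r : ℍ[ℝ]))⁻¹ = ((r⁻¹ : ℝ) : ℍ[ℝ]) := (Quaternion.coe_inv r).symm
  have hn1 : ‖g₁₁‖ = ‖h₁‖ / r := by
    rw [hg₁₁, hcoe_inv, norm_mul, Quaternion.norm_coe, Real.norm_eq_abs,
      abs_of_pos (inv_pos.mpr hrpos), div_eq_mul_inv]
  have hn2 : ‖g₂₁‖ = ‖h₂‖ / r := by
    rw [hg₂₁, hcoe_inv, norm_mul, Quaternion.norm_coe, Real.norm_eq_abs,
      abs_of_pos (inv_pos.mpr hrpos), div_eq_mul_inv]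
  have hnpos : 0 < ‖g₂₁‖ := by
    rw [hn2]; exact div_pos (norm_pos_iff.mpr hh₂) hrpos
  have hnne : ‖g₂₁‖ ≠ 0 := hnpos.ne'
  have hsum1 : ‖g₁₁‖ ^ 2 + ‖g₂₁‖ ^ 2 = 1 := by
    rw [hn2, hn1]
    field_simp
    linarith [hrsq]
  have hsq2 : star g₂₁ * g₂₁ = ((‖g₂₁‖ ^ 2 : ℝ) : ℍ[ℝ]) := by
    rw [Quaternion.star_mul_self, Quaternion.normSq_eq_norm_mul_self, sq]
  have hsq1 : g₁₁ * star g₁₁ = ((‖g₁₁‖ ^ 2 : ℝ) : ℍ[ℝ]) := by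
    rw [Quaternion.self_mul_star, Quaternion.normSq_eq_norm_mul_self, sq]
  have hsq1' : star g₁₁ * g₁₁ = ((‖g₁₁‖ ^ 2 : ℝ) : ℍ[ℝ]) := by
    rw [Quaternion.star_mul_self, Quaternion.normSq_eq_norm_mul_self, sq]
  have hstar22 : star g₂₂ = -(g₁₁ * (((‖g₂₁‖⁻¹ : ℝ)) : ℍ[ℝ]) * star g₂₁) := by
    rw [hg₂₂]
    simp only [StarMul.star_mul, star_neg, star_star, ← Quaternion.coe_inv,
      Quaternion.star_coe, mul_neg, neg_mul, mul_assoc]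
  -- entry identities
  have e00 : star g₁₁ * g₁₁ + star g₂₁ * g₂₁ = 1 := by
    rw [hsq1', hsq2, ← Quaternion.coe_add, hsum1, Quaternion.coe_one]
  have e01 : star g₁₁ * g₁₂ + star g₂₁ * g₂₂ = 0 := by
    have step : star g₂₁ * g₂₂ = -(((‖g₂₁‖ : ℝ) : ℍ[ℝ]) * star g₁₁) := by
      calc star g₂₁ * g₂₂ = -(star g₂₁ * g₂₁ * (((‖g₂₁‖⁻¹ : ℝ) : ℍ[ℝ]) * star g₁₁)) := by
            rw [hg₂₂, ← Quaternion.coe_inv]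
            simp only [neg_mul, mul_neg, mul_assoc]
        _ = -((((‖g₂₁‖ ^ 2 * ‖g₂₁‖⁻¹ : ℝ)) : ℍ[ℝ]) * star g₁₁) := by
            rw [hsq2, ← mul_assoc, ← Quaternion.coe_mul]
        _ = -(((‖g₂₁‖ : ℝ) : ℍ[ℝ]) * star g₁₁) := by
            congr 2
            field_simp [sq]
    rw [step, hg₁₂, Quaternion.coe_commutes, add_neg_cancel]
  have e10 : star g₁₂ * g₁₁ + star g₂₂ * g₂₁ = 0 := by
    have step : star g₂₂ * g₂₁ = -(g₁₁ * ((‖g₂₁‖ : ℝ) : ℍ[ℝ])) := by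
      calc star g₂₂ * g₂₁ = -(g₁₁ * (((‖g₂₁‖⁻¹ : ℝ)) : ℍ[ℝ]) * (star g₂₁ * g₂₁)) := by
            rw [hstar22]; simp only [neg_mul, mul_assoc]
        _ = -(g₁₁ * (((‖g₂₁‖⁻¹ * ‖g₂₁‖ ^ 2 : ℝ)) : ℍ[ℝ])) := by
            rw [hsq2, mul_assoc, ← Quaternion.coe_mul]
        _ = -(g₁₁ * ((‖g₂₁‖ : ℝ) : ℍ[ℝ])) := by
            congr 2
            field_simp [sq]
    rw [step, hg₁₂, Quaternion.star_coe, Quaternion.coe_commutes, add_neg_cancel]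
  have e11 : star g₁₂ * g₁₂ + star g₂₂ * g₂₂ = 1 := by
    have step : star g₂₂ * g₂₂ = ((‖g₁₁‖ ^ 2 : ℝ) : ℍ[ℝ]) := by
      calc star g₂₂ * g₂₂
          = g₁₁ * (((‖g₂₁‖⁻¹ : ℝ)) : ℍ[ℝ]) * (star g₂₁ * g₂₁) * (((‖g₂₁‖⁻¹ : ℝ)) : ℍ[ℝ]) * star g₁₁ := by
            rw [hstar22, hg₂₂, ← Quaternion.coe_inv]
            simp only [neg_mul, mul_neg, neg_neg, mul_assoc]
        _ = g₁₁ * ((((‖g₂₁‖⁻¹ * ‖g₂₁‖ ^ 2 * ‖g₂₁‖⁻¹ : ℝ)) : ℍ[ℝ])) * star g₁₁ := by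
            rw [hsq2]
            simp only [← Quaternion.coe_mul, mul_assoc]
        _ = g₁₁ * star g₁₁ := by
            have : ‖g₂₁‖⁻¹ * ‖g₂₁‖ ^ 2 * ‖g₂₁‖⁻¹ = 1 := by field_simp [sq]
            rw [this, Quaternion.coe_one, mul_one]
        _ = ((‖g₁₁‖ ^ 2 : ℝ) : ℍ[ℝ]) := hsq1
    rw [step, hg₁₂, Quaternion.star_coe, ← Quaternion.coe_mul, ← Quaternion.coe_add]
    rw [show ‖g₂₁‖ * ‖g₂₁‖ + ‖g₁₁‖ ^ 2 = 1 by nlinarith [hsum1]]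
    exact Quaternion.coe_one
  -- vector identities
  have v0 : star g₁₁ * h₁ + star g₂₁ * h₂ = ((r : ℝ) : ℍ[ℝ]) := by
    rw [hg₁₁, hg₂₁, StarMul.star_mul, StarMul.star_mul, hcoe_inv, Quaternion.star_coe,
      mul_assoc, mul_assoc, Quaternion.star_mul_self, Quaternion.star_mul_self,
      ← mul_add, ← Quaternion.coe_add, ← Quaternion.coe_mul]
    congr 1
    rw [Quaternion.normSq_eq_norm_mul_self, Quaternion.normSq_eq_norm_mul_self]
    field_simp
    linarith [hrsq]
  have hstarq2h : star g₂₁ * h₂ = ((‖g₂₁‖ ^ 2 * r : ℝ) : ℍ[ℝ]) := by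
    rw [hn2, hg₂₁, StarMul.star_mul, hcoe_inv, Quaternion.star_coe, mul_assoc,
      Quaternion.star_mul_self, ← Quaternion.coe_mul]
    congr 1
    rw [Quaternion.normSq_eq_norm_mul_self]
    field_simp
  have v1 : star g₁₂ * h₁ + star g₂₂ * h₂ = 0 := by
    have step : star g₂₂ * h₂ = -(h₁ * ((‖g₂₁‖ : ℝ) : ℍ[ℝ])) := by
      calc star g₂₂ * h₂ = -(g₁₁ * (((‖g₂₁‖⁻¹ : ℝ)) : ℍ[ℝ]) * (star g₂₁ * h₂)) := by
            rw [hstar22]; simp only [neg_mul, mul_assoc]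
        _ = -(h₁ * ((r⁻¹ * (‖g₂₁‖⁻¹ * (‖g₂₁‖ ^ 2 * r)) : ℝ) : ℍ[ℝ])) := by
            rw [hstarq2h, hg₁₁, hcoe_inv]
            simp only [mul_assoc, ← Quaternion.coe_mul]
        _ = -(h₁ * ((‖g₂₁‖ : ℝ) : ℍ[ℝ])) := by
            congr 2
            field_simp [sq]
    rw [step, hg₁₂, Quaternion.star_coe, Quaternion.coe_commutes, add_neg_cancel]
  refine ⟨?_, ?_⟩
  · rw [hG]
    refine Matrix.ext fun i j => ?_
    fin_cases i <;> fin_cases j <;>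
      simp [Matrix.mul_apply, Fin.sum_univ_two, Matrix.conjTranspose_apply,
        Matrix.one_apply] <;>
      first
        | exact e00
        | exact e01
        | exact e10
        | exact e11
  · rw [hG]
    funext i
    fin_cases i <;>
      simp [Matrix.mulVec, dotProduct, Fin.sum_univ_two,
        Matrix.conjTranspose_apply] <;>
      first
        | exact v0
        | exact v1
end
end
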